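/- Let m ≥ 3 and let a, b ∈ ZMod m be nonzero with 2a ≠ 0 and 2b ≠ 0, and suppose a = b or a = −b in ZMod m. If the I-graph G = I(m;a,b) is connected, then G is Hamiltonian and, moreover, G contains a Hamilton path whose endpoints are the inner vertices v_0 and v_a (a path visiting every vertex of G exactly once). -/

import Mathlib

open SimpleGraph

/-- The bicirculant graph `B(m;R,S,T)` on vertex set `ZMod m ⊕ ZMod m`. -/
def bicirculant (m : ℕ) (R S T : Set (ZMod m)) : SimpleGraph (ZMod m ⊕ ZMod m) :=
  SimpleGraph.fromRel (fun x y =>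
    match x, y with
    | Sum.inl i, Sum.inl i' => ∃ j ∈ R, i' = i + j
    | Sum.inr i, Sum.inr i' => ∃ j ∈ T, i' = i + j
    | Sum.inl i, Sum.inr i' => ∃ j ∈ S, i' = i + j
    | Sum.inr _, Sum.inl _ => False)

/-- The I-graph `I(m;a,b) = B(m;{a,-a},{0},{b,-b})`. -/
def Igraph (m : ℕ) (a b : ZMod m) : SimpleGraph (ZMod m ⊕ ZMod m) :=
  bicirculant m {a, -a} {0} {b, -b}

/-- Walks built from a vertex function with consecutive adjacencies. -/
lemma exists_walk_of_fn' {V : Type*} (G : SimpleGraph V) (f : ℕ → V) :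
    ∀ n, (∀ i, i < n → G.Adj (f i) (f (i+1))) →
    ∃ w : G.Walk (f 0) (f n),
      w.support = (List.range (n+1)).map f ∧
      w.edges = (List.range n).map (fun i => s(f i, f (i+1))) := by
  intro n
  induction n with
  | zero => exact fun _ => ⟨.nil, by rw [List.range_succ]; simp, by simp⟩
  | succ n ih =>
    intro h
    obtain ⟨w, hs, he⟩ := ih (fun i hi => h i (by omega))
    refine ⟨w.concat (h n (by omega)), ?_, ?_⟩
    · rw [Walk.support_concat, hs]
      rw [show (n+1+1) = (n+1)+1 from rfl, List.range_succ (n := n+1)]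
      simp
    · rw [Walk.edges_concat, he, List.range_succ (n := n)]
      simp

/-- A connected I-graph `I(m;a,b)` with `a = ±b` is hamiltonian and contains a
Hamilton path between the inner vertices `v_0` and `v_a`. -/
theorem Igraph_eq_params_two_hooked (m : ℕ) [NeZero m] (hm : 3 ≤ m) (a b : ZMod m)
    (ha : a ≠ 0) (hb : b ≠ 0) (ha2 : 2 * a ≠ 0) (hb2 : 2 * b ≠ 0)
    (hab : a = b ∨ a = -b) (hconn : (Igraph m a b).Connected) :
    (Igraph m a b).IsHamiltonian ∧
      ∃ p : (Igraph m a b).Walk (Sum.inr 0) (Sum.inr a), p.IsHamiltonian := by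
  classical
  -- adjacency lemmas
  have adjOut : ∀ i : ZMod m, (Igraph m a b).Adj (Sum.inl i) (Sum.inl (i + a)) := by
    intro i
    rw [Igraph, bicirculant, fromRel_adj]
    exact ⟨by simp [ha], Or.inl ⟨a, by simp, rfl⟩⟩
  have adjSpoke : ∀ i : ZMod m, (Igraph m a b).Adj (Sum.inl i) (Sum.inr i) := by
    intro i
    rw [Igraph, bicirculant, fromRel_adj]
    exact ⟨by simp, Or.inl ⟨0, by simp, by simp⟩⟩
  have adjInn : ∀ i : ZMod m, (Igraph m a b).Adj (Sum.inr i) (Sum.inr (i + a)) := by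
    intro i
    have hmem : a ∈ ({b, -b} : Set (ZMod m)) := by
      rcases hab with h | h
      · exact Or.inl h
      · exact Or.inr h
    rw [Igraph, bicirculant, fromRel_adj]
    exact ⟨by simp [ha], Or.inl ⟨a, hmem, rfl⟩⟩
  -- connectivity forces `a` to generate `ZMod m`
  set H := AddSubgroup.zmultiples a with hH
  have hgen : ∀ x : ZMod m, x ∈ H := by
    have hbH : b ∈ H := by
      rcases hab with h | h
      · exact h ▸ AddSubgroup.mem_zmultiples a
      · have : b = -a := by rw [h, neg_neg]
        exact this ▸ H.neg_mem (AddSubgroup.mem_zmultiples a)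
    have edge_mem : ∀ {x y : ZMod m ⊕ ZMod m}, (Igraph m a b).Adj x y →
        Sum.elim id id y - Sum.elim id id x ∈ H := by
      have key : ∀ x y : ZMod m ⊕ ZMod m,
          (match x, y with
            | Sum.inl i, Sum.inl i' => ∃ j ∈ ({a, -a} : Set (ZMod m)), i' = i + j
            | Sum.inr i, Sum.inr i' => ∃ j ∈ ({b, -b} : Set (ZMod m)), i' = i + j
            | Sum.inl i, Sum.inr i' => ∃ j ∈ ({0} : Set (ZMod m)), i' = i + j
            | Sum.inr _, Sum.inl _ => False) →
          Sum.elim id id y - Sum.elim id id x ∈ H := by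
        rintro (i | i) (i' | i') hr
        · obtain ⟨j, hj, rfl⟩ := hr
          simp only [Sum.elim_inl, id, add_sub_cancel_left]
          rcases hj with h | h
          · exact h ▸ AddSubgroup.mem_zmultiples a
          · exact h ▸ H.neg_mem (AddSubgroup.mem_zmultiples a)
        · obtain ⟨j, hj, rfl⟩ := hr
          simp only [Set.mem_singleton_iff] at hj
          simpa [hj] using H.zero_mem
        · exact absurd hr not_false
        · obtain ⟨j, hj, rfl⟩ := hr
          simp only [Sum.elim_inr, id, add_sub_cancel_left]
          rcases hj with h | h
          · exact h ▸ hbH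
          · exact h ▸ H.neg_mem hbH
      intro x y hxy
      rw [Igraph, bicirculant, fromRel_adj] at hxy
      rcases hxy.2 with h | h
      · exact key x y h
      · have := key y x h
        simpa using H.neg_mem this
    have walk_mem : ∀ {x y : ZMod m ⊕ ZMod m} (w : (Igraph m a b).Walk x y),
        Sum.elim id id y - Sum.elim id id x ∈ H := by
      intro x y w
      induction w with
      | nil => simpa using H.zero_mem
      | @cons u v z h w ih =>
        have h1 := edge_mem h
        have h2 : Sum.elim id id z - Sum.elim id id u =
            (Sum.elim id id z - Sum.elim id id v) + (Sum.elim id id v - Sum.elim id id u) := by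
          ring
        rw [h2]
        exact H.add_mem ih h1
    intro x
    have := walk_mem ((hconn.preconnected (Sum.inl 0) (Sum.inl x)).some)
    simpa using this
  have htop : H = ⊤ := (AddSubgroup.eq_top_iff' H).mpr hgen
  have hord : addOrderOf a = m := by
    rw [← Nat.card_zmultiples, ← hH, htop, Nat.card_congr AddSubgroup.topEquiv.toEquiv,
      Nat.card_zmod]
  have hdvd : ∀ k : ℕ, k • a = 0 → m ∣ k := by
    intro k hk
    rw [← hord]
    exact addOrderOf_dvd_iff_nsmul_eq_zero.mpr hk
  have hcancel : ∀ k l : ℕ, k ≤ l → l < m → k • a = l • a → k = l := by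
    intro k l hkl hl h
    have h0 : (l - k) • a = 0 := by
      rw [sub_nsmul a hkl, h]
      simp
    have h3 : l - k = 0 := Nat.eq_zero_of_dvd_of_lt (hdvd _ h0) (by omega)
    omega
  have hinj : ∀ k l : ℕ, k < m → l < m → k • a = l • a → k = l := by
    intro k l hk hl h
    rcases le_total k l with hle | hle
    · exact hcancel k l hle hl h
    · exact (hcancel l k hle hk h.symm).symm
  have hsurj : ∀ x : ZMod m, ∃ k : ℕ, k < m ∧ k • a = x := by
    have hbij : Function.Bijective (fun k : Fin m => (k : ℕ) • a) := by
      rw [Fintype.bijective_iff_injective_and_card]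
      exact ⟨fun k l h => Fin.ext (hinj k l k.2 l.2 h), by simp [ZMod.card]⟩
    intro x
    obtain ⟨k, hk⟩ := hbij.2 x
    exact ⟨k, k.2, hk⟩
  -- the Hamilton path as a vertex function
  set f : ℕ → ZMod m ⊕ ZMod m := fun k =>
    if k = 0 then Sum.inr 0 else if k ≤ m then Sum.inl ((k-1) • a)
    else Sum.inr ((2*m - k) • a) with hf
  have hf0 : f 0 = Sum.inr 0 := by simp [hf]
  have hfmid : ∀ k, 1 ≤ k → k ≤ m → f k = Sum.inl ((k-1) • a) := by
    intro k h1 h2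
    simp only [hf]
    rw [if_neg (by omega), if_pos h2]
  have hfhi : ∀ k, m < k → f k = Sum.inr ((2*m - k) • a) := by
    intro k hk
    simp only [hf]
    rw [if_neg (by omega), if_neg (by omega)]
  have hadj : ∀ i, i < 2*m - 1 → (Igraph m a b).Adj (f i) (f (i+1)) := by
    intro i hi
    rcases Nat.eq_zero_or_pos i with rfl | hpos
    · rw [hf0, hfmid 1 le_rfl (by omega)]
      simpa using (adjSpoke 0).symm
    rcases lt_or_ge i m with him | him
    · rw [hfmid i hpos (by omega), hfmid (i+1) (by omega) (by omega)]
      rw [show i+1-1 = (i-1)+1 from by omega, succ_nsmul]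
      exact adjOut _
    by_cases him2 : i = m
    · rw [him2, hfmid m (by omega) le_rfl, hfhi (m+1) (by omega),
        show 2*m - (m+1) = m-1 from by omega]
      exact adjSpoke _
    · rw [hfhi i (by omega), hfhi (i+1) (by omega)]
      rw [show 2*m - i = (2*m - (i+1)) + 1 from by omega, succ_nsmul]
      exact (adjInn _).symm
  have hfinj : ∀ k l, k < 2*m → l < 2*m → f k = f l → k = l := by
    have key : ∀ k l, k < 2*m → l < 2*m → k ≤ l → f k = f l → k = l := by
      intro k l hk hl hkl h
      rcases Nat.eq_zero_or_pos k with rfl | hk1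
      · rcases Nat.eq_zero_or_pos l with rfl | hl1
        · rfl
        rcases le_or_gt l m with hlm | hlm
        · rw [hf0, hfmid l hl1 hlm] at h
          exact absurd h (by simp)
        · rw [hf0, hfhi l hlm] at h
          have h2 : (2*m - l) • a = 0 • a := by
            simpa [zero_nsmul] using (Sum.inr.inj h).symm
          have := hinj _ _ (by omega) (by omega) h2
          omega
      · rcases le_or_gt k m with hkm | hkm
        · rcases le_or_gt l m with hlm | hlm
          · rw [hfmid k hk1 hkm, hfmid l (by omega) hlm] at h
            have := hinj (k-1) (l-1) (by omega) (by omega) (Sum.inl.inj h)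
            omega
          · rw [hfmid k hk1 hkm, hfhi l hlm] at h
            exact absurd h (by simp)
        · rw [hfhi k hkm, hfhi l (by omega)] at h
          have := hinj (2*m-k) (2*m-l) (by omega) (by omega) (Sum.inr.inj h)
          omega
    intro k l hk hl h
    rcases le_total k l with hle | hle
    · exact key k l hk hl hle h
    · exact (key l k hl hk hle h.symm).symm
  have hfsurj : ∀ v : ZMod m ⊕ ZMod m, ∃ k, k < 2*m ∧ f k = v := by
    rintro (x | x)
    · obtain ⟨k, hk, rfl⟩ := hsurj x
      exact ⟨k+1, by omega, by rw [hfmid (k+1) (by omega) (by omega)]; simp⟩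
    · obtain ⟨k, hk, rfl⟩ := hsurj x
      rcases Nat.eq_zero_or_pos k with rfl | hk1
      · exact ⟨0, by omega, by rw [hf0, zero_nsmul]⟩
      · refine ⟨2*m - k, by omega, ?_⟩
        rw [hfhi _ (by omega), show 2*m - (2*m - k) = k from by omega]
  -- build the Hamilton path
  obtain ⟨w, hws, hwe⟩ := exists_walk_of_fn' (Igraph m a b) f (2*m-1) hadj
  have hend : f (2*m-1) = Sum.inr a := by
    rw [hfhi _ (by omega), show 2*m - (2*m-1) = 1 from by omega, one_nsmul]
  set p := w.copy hf0 hend with hp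
  have hps : p.support = (List.range (2*m)).map f := by
    rw [hp, Walk.support_copy, hws, show 2*m-1+1 = 2*m from by omega]
  have hpe : p.edges = (List.range (2*m-1)).map (fun i => s(f i, f (i+1))) := by
    rw [hp, Walk.edges_copy, hwe]
  have hnodup : ((List.range (2*m)).map f).Nodup := by
    refine List.Nodup.map_on ?_ List.nodup_range
    intro x hx y hy hxy
    exact hfinj x y (List.mem_range.mp hx) (List.mem_range.mp hy) hxy
  have hham : p.IsHamiltonian := by
    intro v
    rw [hps]
    refine @List.count_eq_one_of_mem _ instBEqOfDecidableEq _ _ _ hnodup ?_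
    obtain ⟨k, hk, hfk⟩ := hfsurj v
    exact List.mem_map.mpr ⟨k, List.mem_range.mpr hk, hfk⟩
  -- close up into a Hamilton cycle
  have hadj0a : (Igraph m a b).Adj (Sum.inr 0) (Sum.inr a) := by simpa using adjInn 0
  set rc := p.reverse with hrc
  have hrcham : rc.IsHamiltonian := by
    intro v
    rw [hrc, Walk.support_reverse, hps]
    refine @List.count_eq_one_of_mem _ instBEqOfDecidableEq _ _ _ (by simpa using hnodup) ?_
    rw [List.mem_reverse]
    obtain ⟨k, hk, hfk⟩ := hfsurj v
    exact List.mem_map.mpr ⟨k, List.mem_range.mpr hk, hfk⟩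
  have hnotmem : s(Sum.inr (0 : ZMod m), (Sum.inr a : ZMod m ⊕ ZMod m)) ∉ rc.edges := by
    rw [hrc, Walk.edges_reverse, List.mem_reverse, hpe]
    intro hmem
    obtain ⟨i, hi, hi2⟩ := List.mem_map.mp hmem
    have hi' := List.mem_range.mp hi
    rw [Sym2.eq_iff] at hi2
    rcases hi2 with ⟨h1, h2⟩ | ⟨h1, h2⟩
    · have h0 : i = 0 := hfinj i 0 (by omega) (by omega) (h1.trans hf0.symm)
      subst h0
      rw [hfmid 1 le_rfl (by omega)] at h2
      simp at h2
    · have h0 : i + 1 = 0 := hfinj (i+1) 0 (by omega) (by omega) (h2.trans hf0.symm)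
      omega
  set c := Walk.cons hadj0a rc with hc
  have hcyc : c.IsCycle := (Walk.cons_isCycle_iff rc hadj0a).mpr ⟨hrcham.isPath, hnotmem⟩
  have htail : c.tail.IsHamiltonian := by
    intro v
    rw [Walk.support_tail_of_not_nil c Walk.not_nil_cons, hc, Walk.support_cons, List.tail_cons]
    exact hrcham v
  exact ⟨fun _ => ⟨_, c, ⟨hcyc, htail⟩⟩, p, hham⟩
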